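/- Choi's criterion: a linear map Λ : M_d(ℂ) → M_d(ℂ) is completely positive if and only if its Choi matrix (I ⊗ Λ)(|φ₊⟩⟨φ₊|) is positive semidefinite, where |φ₊⟩ = (1/√d)Σ_i |ii⟩. -/

import Mathlib

open Matrix Complex ComplexOrder

abbrev Mat (d : ℕ) := Matrix (Fin d) (Fin d) ℂ

/-- The extension `I_n ⊗ Λ` of a matrix map `Λ` by the identity on a first tensor factor. -/
def matExt {α β : Type*} [Fintype α] [Fintype β] (n : ℕ)
    (Λ : Matrix α α ℂ → Matrix β β ℂ)
    (A : Matrix (Fin n × α) (Fin n × α) ℂ) :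
    Matrix (Fin n × β) (Fin n × β) ℂ :=
  fun p q => Λ (fun k l => A (p.1, k) (q.1, l)) p.2 q.2

/-- The extension `Λ ⊗ I` of a matrix map `Λ` by the identity on a second tensor factor. -/
def extSecond {α β : Type*} [Fintype α] [Fintype β] (n : ℕ)
    (Λ : Matrix α α ℂ → Matrix β β ℂ)
    (A : Matrix (α × Fin n) (α × Fin n) ℂ) :
    Matrix (β × Fin n) (β × Fin n) ℂ :=
  fun p q => Λ (fun k l => A (k, p.2) (l, q.2)) p.1 q.1

/-- A matrix map is positive if it preserves positive semidefiniteness. -/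
def IsPosMap {α β : Type*} [Fintype α] [Fintype β]
    (Λ : Matrix α α ℂ → Matrix β β ℂ) : Prop :=
  ∀ A, A.PosSemidef → (Λ A).PosSemidef

/-- Complete positivity: every identity extension preserves positive semidefiniteness. -/
def IsCP {α β : Type*} [Fintype α] [Fintype β]
    (Λ : Matrix α α ℂ → Matrix β β ℂ) : Prop :=
  ∀ (n : ℕ) (A : Matrix (Fin n × α) (Fin n × α) ℂ),
    A.PosSemidef → (matExt n Λ A).PosSemidef

/-- Trace preservation. -/
def IsTP {α β : Type*} [Fintype α] [Fintype β]
    (Λ : Matrix α α ℂ → Matrix β β ℂ) : Prop :=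
  ∀ A, (Λ A).trace = A.trace

def IsCPTP {α β : Type*} [Fintype α] [Fintype β]
    (Λ : Matrix α α ℂ → Matrix β β ℂ) : Prop :=
  IsCP Λ ∧ IsTP Λ

/-- The trace norm `‖A‖₁ = Tr √(AᴴA)`. -/
noncomputable def traceNorm {m : Type*} [Fintype m] [DecidableEq m] (A : Matrix m m ℂ) : ℝ :=
  (((Matrix.posSemidef_conjTranspose_mul_self A).1.eigenvectorUnitary.1 *
    diagonal ((fun x : ℝ => (x : ℂ)) ∘ Real.sqrt ∘ (Matrix.posSemidef_conjTranspose_mul_self A).1.eigenvalues) *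
    (star (Matrix.posSemidef_conjTranspose_mul_self A).1.eigenvectorUnitary : Matrix m m ℂ)).trace).re

/-- The `n`-fold tensor power `Λ^{⊗n}` of a linear matrix map. -/
noncomputable def tensorPow {d : ℕ} (n : ℕ) (Λ : Mat d → Mat d)
    (A : Matrix (Fin n → Fin d) (Fin n → Fin d) ℂ) :
    Matrix (Fin n → Fin d) (Fin n → Fin d) ℂ :=
  fun p q => ∑ i : Fin n → Fin d, ∑ j : Fin n → Fin d,
    A i j * ∏ k, Λ (Matrix.single (i k) (j k) 1) (p k) (q k)

/-- The (normalized) Choi matrix `(I ⊗ Λ)(|φ₊⟩⟨φ₊|)`. -/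
noncomputable def choi {d : ℕ} (Λ : Mat d → Mat d) :
    Matrix (Fin d × Fin d) (Fin d × Fin d) ℂ :=
  fun p q => (1 / (d : ℂ)) * Λ (Matrix.single p.1 q.1 1) p.2 q.2

noncomputable def σX : Mat 2 := !![0, 1; 1, 0]
noncomputable def σY : Mat 2 := !![0, -Complex.I; Complex.I, 0]
noncomputable def σZ : Mat 2 := !![1, 0; 0, -1]

/-- The single-collision channel Λ₁. -/
noncomputable def Lam1 (ε : ℝ) (ρ : Mat 2) : Mat 2 :=
  ((1 - 2*ε : ℝ) : ℂ) • ρ + ((ε : ℝ) : ℂ) • (σZ * ρ * σZ + σX * ρ * σX)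

/-- The two-collision channel Λ₂. -/
noncomputable def Lam2 (ε : ℝ) (ρ : Mat 2) : Mat 2 :=
  (((1 - 2*ε)^2 + 4*ε^2 : ℝ) : ℂ) • ρ +
    ((2*ε*(1 - 2*ε) : ℝ) : ℂ) • (σZ * ρ * σZ + σX * ρ * σX)

/-- A general qubit Pauli map. -/
noncomputable def pauliMap (q0 qx qy qz : ℝ) (ρ : Mat 2) : Mat 2 :=
  (q0 : ℂ) • ρ + (qx : ℂ) • (σX * ρ * σX) + (qy : ℂ) • (σY * ρ * σY) + (qz : ℂ) • (σZ * ρ * σZ)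

/-- The qubit state with Bloch vector `(x, y, z)`. -/
noncomputable def bloch (x y z : ℝ) : Mat 2 :=
  (1/2 : ℂ) • !![1 + (z : ℂ), (x : ℂ) - Complex.I * (y : ℂ);
                 (x : ℂ) + Complex.I * (y : ℂ), 1 - (z : ℂ)]

/-- The coarse-grained state `λ(ρ ⊗ ρ)` of a qubit with Bloch `z`-component `rz`. -/
noncomputable def cg (rz : ℝ) : Mat 2 :=
  !![(((1 + rz)^2 / 4 : ℝ) : ℂ), 0;
     0, (((1 - rz)^2 / 4 + (1 - rz^2) / 2 : ℝ) : ℂ)]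

section ChoiAux

open Finset

/-- Interchange of four nested finite sums. -/
lemma sum4_comm {ι₁ ι₂ ι₃ ι₄ : Type*} [Fintype ι₁] [Fintype ι₂] [Fintype ι₃] [Fintype ι₄]
    (f : ι₁ → ι₂ → ι₃ → ι₄ → ℂ) :
    ∑ i, ∑ j, ∑ t, ∑ m, f i j t m = ∑ t, ∑ m, ∑ i, ∑ j, f i j t m :=
  calc ∑ i, ∑ j, ∑ t, ∑ m, f i j t m
      = ∑ i, ∑ t, ∑ j, ∑ m, f i j t m :=
        Finset.sum_congr rfl fun _ _ => Finset.sum_comm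
    _ = ∑ t, ∑ i, ∑ j, ∑ m, f i j t m := Finset.sum_comm
    _ = ∑ t, ∑ i, ∑ m, ∑ j, f i j t m :=
        Finset.sum_congr rfl fun _ _ => Finset.sum_congr rfl fun _ _ => Finset.sum_comm
    _ = ∑ t, ∑ m, ∑ i, ∑ j, f i j t m :=
        Finset.sum_congr rfl fun _ _ => Finset.sum_comm

/-- A linear matrix map is determined entrywise by its values on the standard basis. -/
lemma lam_entry_expand {d : ℕ} {Λ : Mat d → Mat d} (hlin : IsLinearMap ℂ Λ)
    (M : Mat d) (a b : Fin d) :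
    Λ M a b = ∑ i, ∑ j, M i j * Λ (Matrix.single i j 1) a b := by
  have h1 : Λ M = ∑ i, ∑ j, M i j • Λ (Matrix.single i j 1) := by
    conv_lhs => rw [Matrix.matrix_eq_sum_single M]
    rw [show Λ = ⇑(hlin.mk' Λ) from rfl, map_sum]
    refine Finset.sum_congr rfl fun i _ => ?_
    rw [map_sum]
    refine Finset.sum_congr rfl fun j _ => ?_
    have h2 : Matrix.single i j (M i j) = M i j • Matrix.single i j 1 := by
      rw [Matrix.smul_single, smul_eq_mul, mul_one]
    rw [h2, _root_.map_smul]
  rw [h1]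
  simp [Matrix.sum_apply]

lemma psd_eq_conjTranspose_mul_self {m : Type*} [Fintype m] [DecidableEq m]
    {M : Matrix m m ℂ} (hM : M.PosSemidef) : ∃ B : Matrix m m ℂ, M = Bᴴ * B := by
  open scoped MatrixOrder in
  obtain ⟨B, hB⟩ := CStarAlgebra.nonneg_iff_eq_star_mul_self.mp hM.nonneg
  exact ⟨B, hB⟩

/-- A nonnegative real multiple of a PSD matrix is PSD. -/
lemma posSemidef_real_smul {m : Type*} [Fintype m] [DecidableEq m]
    {M : Matrix m m ℂ} (hM : M.PosSemidef) {r : ℝ} (hr : 0 ≤ r) :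
    ((r : ℂ) • M).PosSemidef := by
  obtain ⟨B, rfl⟩ := psd_eq_conjTranspose_mul_self hM
  have key : ((r : ℂ) • (Bᴴ * B)) =
      ((Real.sqrt r : ℂ) • B)ᴴ * ((Real.sqrt r : ℂ) • B) := by
    rw [Matrix.conjTranspose_smul, Matrix.smul_mul, Matrix.mul_smul, smul_smul]
    congr 1
    rw [Complex.star_def, Complex.conj_ofReal, ← Complex.ofReal_mul,
      Real.mul_self_sqrt hr]
  rw [key]
  exact Matrix.posSemidef_conjTranspose_mul_self _

end ChoiAux

/-- Choi's criterion: a linear map `Λ : M_d(ℂ) → M_d(ℂ)` is completely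
positive iff its Choi matrix `(I ⊗ Λ)(|φ₊⟩⟨φ₊|)` is positive semidefinite. -/
theorem choi_criterion {d : ℕ} (hd : 0 < d)
    (Λ : Mat d → Mat d) (hlin : IsLinearMap ℂ Λ) :
    IsCP Λ ↔ (choi Λ).PosSemidef := by
  have hdC : (d : ℂ) ≠ 0 := by exact_mod_cast hd.ne'
  constructor
  · -- CP ⟹ Choi PSD
    intro hCP
    set v : Fin d × Fin d → ℂ := fun p => if p.1 = p.2 then 1 else 0 with hv
    set A : Matrix (Fin d × Fin d) (Fin d × Fin d) ℂ :=
      Matrix.of fun p q => v p * (starRingEnd ℂ) (v q) with hAdef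
    have hA : A.PosSemidef := by
      set W : Matrix (Fin 1) (Fin d × Fin d) ℂ :=
        Matrix.of fun _ p => (starRingEnd ℂ) (v p) with hW
      have : A = Wᴴ * W := by
        ext p q
        simp [hAdef, hW, Matrix.mul_apply, Matrix.conjTranspose_apply, mul_comm]
      rw [this]
      exact Matrix.posSemidef_conjTranspose_mul_self _
    have hMA := hCP d A hA
    have hchoi : choi Λ = ((1 / (d : ℝ) : ℝ) : ℂ) • matExt d Λ A := by
      ext ⟨i, a⟩ ⟨j, b⟩
      have hstd : (fun k l => A ((i, a).1, k) ((j, b).1, l)) =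
          Matrix.single i j 1 := by
        funext k l
        simp only [hAdef, hv, Matrix.of_apply, Matrix.single]
        by_cases hik : i = k <;> by_cases hjl : j = l <;>
          simp [hik, hjl, Matrix.of_apply]
      simp only [choi, matExt, Matrix.smul_apply, hstd, smul_eq_mul]
      push_cast
      ring
    rw [hchoi]
    exact posSemidef_real_smul hMA (by positivity)
  · -- Choi PSD ⟹ CP
    intro hChoi n A hA
    obtain ⟨B, hB⟩ := psd_eq_conjTranspose_mul_self hChoi
    obtain ⟨N, hN⟩ := psd_eq_conjTranspose_mul_self hA
    set K : Matrix ((Fin n × Fin d) × (Fin d × Fin d)) (Fin n × Fin d) ℂ :=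
      Matrix.of fun tm qb =>
        ((Real.sqrt d : ℝ) : ℂ) * ∑ j, N tm.1 (qb.1, j) * B tm.2 (j, qb.2) with hK
    have hd2 : ((Real.sqrt d : ℝ) : ℂ) * ((Real.sqrt d : ℝ) : ℂ) = (d : ℂ) := by
      rw [← Complex.ofReal_mul, Real.mul_self_sqrt (by positivity)]
      norm_num
    have key : matExt n Λ A = Kᴴ * K := by
      ext ⟨p1, a⟩ ⟨q1, b⟩
      have hAe : ∀ (i j : Fin d), A (p1, i) (q1, j) =
          ∑ t, (starRingEnd ℂ) (N t (p1, i)) * N t (q1, j) := by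
        intro i j
        rw [hN]
        simp [Matrix.mul_apply, Matrix.conjTranspose_apply]
      have hCe : ∀ (i j : Fin d), Λ (Matrix.single i j 1) a b =
          (d : ℂ) * ∑ m, (starRingEnd ℂ) (B m (i, a)) * B m (j, b) := by
        intro i j
        have h2 : choi Λ (i, a) (j, b) =
            ∑ m, (starRingEnd ℂ) (B m (i, a)) * B m (j, b) := by
          rw [hB]
          simp [Matrix.mul_apply, Matrix.conjTranspose_apply]
        have h1 : choi Λ (i, a) (j, b) =
            (1 / (d : ℂ)) * Λ (Matrix.single i j 1) a b := rfl
        rw [h1] at h2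
        field_simp at h2
        rw [h2]
      show Λ (fun k l => A ((p1, a).1, k) ((q1, b).1, l)) a b = _
      calc Λ (fun k l => A ((p1, a).1, k) ((q1, b).1, l)) a b
          = ∑ i, ∑ j, A (p1, i) (q1, j) *
              Λ (Matrix.single i j 1) a b := lam_entry_expand hlin _ a b
        _ = ∑ i, ∑ j, ∑ t, ∑ m, (d : ℂ) *
              ((starRingEnd ℂ) (N t (p1, i)) * N t (q1, j)) *
              ((starRingEnd ℂ) (B m (i, a)) * B m (j, b)) := by
            refine Finset.sum_congr rfl fun i _ => Finset.sum_congr rfl fun j _ => ?_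
            rw [hAe, hCe, Finset.sum_mul]
            refine Finset.sum_congr rfl fun t _ => ?_
            rw [Finset.mul_sum, Finset.mul_sum]
            refine Finset.sum_congr rfl fun m _ => ?_
            ring
        _ = ∑ t, ∑ m, ∑ i, ∑ j, (d : ℂ) *
              ((starRingEnd ℂ) (N t (p1, i)) * N t (q1, j)) *
              ((starRingEnd ℂ) (B m (i, a)) * B m (j, b)) := sum4_comm _
        _ = (Kᴴ * K) (p1, a) (q1, b) := by
            conv_rhs => rw [Matrix.mul_apply, Fintype.sum_prod_type]
            refine Finset.sum_congr rfl fun t _ => Finset.sum_congr rfl fun m _ => ?_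
            simp only [hK, Matrix.conjTranspose_apply, Matrix.of_apply, Complex.star_def,
              _root_.map_mul, map_sum, Complex.conj_ofReal]
            rw [mul_mul_mul_comm, hd2, Finset.sum_mul_sum, Finset.mul_sum]
            refine Finset.sum_congr rfl fun i _ => ?_
            rw [Finset.mul_sum]
            refine Finset.sum_congr rfl fun j _ => ?_
            ring
    rw [key]
    exact Matrix.posSemidef_conjTranspose_mul_self _
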